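/- arXiv:1703.10311 — 2 statements merged into one kernel-verified Lean document; each statement's English description precedes it below -/
import Mathlib

section
/- Every holomorphic function f : ℂ → ℂ satisfying f(z + 2π) = f(z) for all z, and square integrable against e^{-|z|²} dz, admits an expansion f(z) = Σ_{n∈ℤ} c_n e^{inz} converging locally uniformly on ℂ. -/
open MeasureTheory Complex Real Filter

private lemma rect_shift (h : ℂ → ℂ) (hdiff : Differentiable ℂ h)
    (hper : ∀ z, h (z + 2 * π) = h z) (y : ℝ) :
    (∫ x in (0:ℝ)..2*π, h x) = ∫ x in (0:ℝ)..2*π, h (x + y * Complex.I) := by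
  have H := Complex.integral_boundary_rect_eq_zero_of_differentiableOn h 0
    (2*π + y*Complex.I) hdiff.differentiableOn
  simp only [Complex.add_re, Complex.add_im, Complex.zero_re, Complex.zero_im,
    Complex.mul_re, Complex.mul_im, Complex.I_re, Complex.I_im, Complex.ofReal_re,
    Complex.ofReal_im, smul_eq_mul] at H
  norm_num at H
  have hv : (∫ s in (0:ℝ)..y, h (2 * ↑π + ↑s * Complex.I))
      = ∫ s in (0:ℝ)..y, h (↑s * Complex.I) := by
    apply intervalIntegral.integral_congr
    intro s _
    show h (2 * ↑π + ↑s * Complex.I) = h (↑s * Complex.I)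
    rw [add_comm]
    exact hper _
  linear_combination H - Complex.I * hv

private lemma gper (f : ℂ → ℂ) (hf_per : ∀ z, f (z + 2 * π) = f z) (n : ℤ) :
    ∀ z, (fun w => Complex.exp (-(Complex.I * n * w)) * f w) (z + 2 * π)
      = (fun w => Complex.exp (-(Complex.I * n * w)) * f w) z := by
  intro z
  have h1 : Complex.exp (-(Complex.I * n * (z + 2 * π)))
      = Complex.exp (-(Complex.I * n * z)) := by
    rw [show -(Complex.I * (n:ℂ) * (z + 2 * (π:ℂ))) =
        -(Complex.I * n * z) + ((-n : ℤ) : ℂ) * (2 * π * Complex.I) by push_cast; ring,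
      Complex.exp_add, Complex.exp_int_mul_two_pi_mul_I, mul_one]
  simp only []
  rw [h1, hf_per z]

private lemma gdiff (f : ℂ → ℂ) (hf : Differentiable ℂ f) (n : ℤ) :
    Differentiable ℂ (fun w => Complex.exp (-(Complex.I * n * w)) * f w) :=
  ((Complex.differentiable_exp).comp (by fun_prop)).mul hf

private lemma coeff_bound (f : ℂ → ℂ) (hf_hol : Differentiable ℂ f)
    (hf_per : ∀ z, f (z + 2 * π) = f z) (R : ℝ) (hR : 0 ≤ R) :
    ∃ C : ℝ, 0 ≤ C ∧ ∀ n : ℤ,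
      ‖∫ x in (0:ℝ)..2*π, Complex.exp (-(Complex.I * n * x)) * f x‖
        ≤ C * Real.exp (-(|n| * (R+1))) := by
  obtain ⟨M, hM⟩ := (isCompact_closedBall (0:ℂ) (2*π + R + 1)).exists_bound_of_continuousOn
    hf_hol.continuous.continuousOn
  have hM0 : 0 ≤ M := le_trans (norm_nonneg _)
    (hM 0 (by simp [Metric.mem_closedBall]; positivity))
  refine ⟨2*π*M, by positivity, fun n => ?_⟩
  set y : ℝ := if 0 ≤ n then -(R+1) else (R+1) with hy
  rw [rect_shift _ (gdiff f hf_hol n) (gper f hf_per n) y]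
  have hny : (n : ℝ) * y = -(|n| * (R+1)) := by
    rcases le_or_gt 0 n with h | h
    · rw [hy, if_pos h, abs_of_nonneg h]; push_cast; ring
    · rw [hy, if_neg (not_le.mpr h), abs_of_neg h]; push_cast; ring
  have hbd : ∀ x ∈ Set.uIoc (0:ℝ) (2*π),
      ‖Complex.exp (-(Complex.I * n * (x + y*Complex.I))) * f (x + y*Complex.I)‖
        ≤ M * Real.exp (-(|n| * (R+1))) := by
    intro x hx
    rw [Set.uIoc_of_le (by positivity)] at hx
    have hxx : |x| ≤ 2*π := by
      rw [_root_.abs_of_nonneg hx.1.le]; exact hx.2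
    have hyy : |y| ≤ R + 1 := by
      rcases le_or_gt 0 n with h | h
      · rw [hy, if_pos h, abs_neg, _root_.abs_of_nonneg (by positivity : (0:ℝ) ≤ R+1)]
      · rw [hy, if_neg (not_le.mpr h), _root_.abs_of_nonneg (by positivity : (0:ℝ) ≤ R+1)]
    have hmem : (↑x + ↑y * Complex.I) ∈ Metric.closedBall (0:ℂ) (2*π + R + 1) := by
      rw [Metric.mem_closedBall, dist_zero_right]
      calc ‖(↑x + ↑y * Complex.I)‖ ≤ |(↑x + ↑y * Complex.I).re| + |(↑x + ↑y * Complex.I).im| :=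
            Complex.norm_le_abs_re_add_abs_im _
        _ ≤ 2*π + (R+1) := by simp; linarith
        _ = 2*π + R + 1 := by ring
    rw [norm_mul]
    have he : ‖Complex.exp (-(Complex.I * n * (x + y*Complex.I)))‖
        = Real.exp (-(|n| * (R+1))) := by
      rw [Complex.norm_exp, ← hny]
      congr 1
      simp [Complex.mul_re, Complex.mul_im]
    rw [he, mul_comm]
    exact mul_le_mul_of_nonneg_right (hM _ hmem) (Real.exp_pos _).le
  calc ‖∫ x in (0:ℝ)..2*π, Complex.exp (-(Complex.I * n * (x + y*Complex.I))) * f (x + y*Complex.I)‖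
      ≤ M * Real.exp (-(|n| * (R+1))) * |2*π - 0| :=
        intervalIntegral.norm_integral_le_of_norm_le_const hbd
    _ = 2*π*M * Real.exp (-(|n| * (R+1))) := by
        rw [sub_zero, _root_.abs_of_nonneg (by positivity : (0:ℝ) ≤ 2*π)]; ring

private lemma summable_exp_abs (a : ℝ) (ha : 0 < a) :
    Summable (fun n : ℤ => Real.exp (-(|n| * a))) := by
  have h1 : Summable (fun k : ℕ => Real.exp ((k : ℝ) * (-a))) :=
    Real.summable_exp_nat_mul_iff.mpr (by linarith)
  apply Summable.of_nat_of_neg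
  · refine h1.congr fun k => ?_
    congr 1
    push_cast
    rw [_root_.abs_of_nonneg (by positivity : (0:ℝ) ≤ (k:ℝ))]
    ring
  · refine h1.congr fun k => ?_
    congr 1
    push_cast [abs_neg]
    rw [_root_.abs_of_nonneg (by positivity : (0:ℝ) ≤ (k:ℝ))]
    ring

/-- Every entire function `f : ℂ → ℂ` that is `2π`-periodic in
the real direction (`f (z + 2π) = f z`) and square integrable against
`e^{-|z|²} dz` admits an expansion `f z = ∑_{n∈ℤ} c_n e^{inz}` whose partial
sums (over finite sets of indices) converge to `f` locally uniformly on `ℂ`. -/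
theorem periodic_entire_fourier_expansion (f : ℂ → ℂ)
    (hf_hol : Differentiable ℂ f)
    (hf_per : ∀ z, f (z + 2 * π) = f z)
    (hf_L2 : Integrable (fun z : ℂ => ‖f z‖ ^ 2 * Real.exp (-‖z‖ ^ 2))) :
    ∃ c : ℤ → ℂ, TendstoLocallyUniformly
      (fun (s : Finset ℤ) (z : ℂ) => ∑ n ∈ s, c n * Complex.exp (Complex.I * n * z))
      f atTop := by
  haveI hfact : Fact (0 < 2*π) := ⟨by positivity⟩
  have h2π : (2*(π:ℝ)) ≠ 0 := by positivity
  have hcont : Continuous (AddCircle.liftIco (2*π) 0 (fun x : ℝ => f x)) := by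
    apply AddCircle.liftIco_zero_continuous
    · show f ((0:ℝ):ℂ) = f ((2*π:ℝ):ℂ)
      push_cast
      rw [← hf_per 0, zero_add]
    · exact (hf_hol.continuous.comp Complex.continuous_ofReal).continuousOn
  set Fc : C(AddCircle (2*π), ℂ) := ⟨AddCircle.liftIco (2*π) 0 (fun x : ℝ => f x), hcont⟩
    with hFc
  set c : ℤ → ℂ := fun n => fourierCoeff (Fc : AddCircle (2*π) → ℂ) n with hcdef
  -- integral formula for the coefficients
  have hc : ∀ n : ℤ, c n = (1/(2*(π:ℂ))) *
      ∫ x in (0:ℝ)..2*π, Complex.exp (-(Complex.I * n * x)) * f x := by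
    intro n
    rw [hcdef]
    show fourierCoeff (Fc : AddCircle (2*π) → ℂ) n = _
    rw [fourierCoeff_eq_intervalIntegral _ n 0, zero_add]
    have hint : (∫ x in (0:ℝ)..2*π, (fourier (-n) (x : AddCircle (2*π))) • Fc (x : AddCircle (2*π)))
        = ∫ x in (0:ℝ)..2*π, Complex.exp (-(Complex.I * n * x)) * f x := by
      apply intervalIntegral.integral_congr_ae
      have hae : ∀ᵐ x : ℝ, x ≠ 2*π := by
        refine (ae_iff).mpr ?_
        have : {x : ℝ | ¬ x ≠ 2*π} = {2*π} := by ext x; simp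
        rw [this]
        exact Real.volume_singleton
      filter_upwards [hae] with x hx hmem
      rw [Set.uIoc_of_le (by positivity)] at hmem
      have hxIco : x ∈ Set.Ico (0:ℝ) (2*π) := ⟨hmem.1.le, lt_of_le_of_ne hmem.2 hx⟩
      have h1 : Fc (x : AddCircle (2*π)) = f x := by
        show AddCircle.liftIco (2*π) 0 (fun x : ℝ => f x) ↑x = f ↑x
        exact AddCircle.liftIco_zero_coe_apply hxIco
      rw [smul_eq_mul, h1]
      congr 1
      rw [fourier_coe_apply]
      congr 1
      push_cast
      field_simp [Complex.ofReal_ne_zero.mpr Real.pi_ne_zero]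
    rw [hint]
    rw [Complex.real_smul]
    congr 1
    push_cast
    ring
  -- norm bound on the coefficients
  have hcb : ∀ R : ℝ, 0 ≤ R → ∃ C : ℝ, 0 ≤ C ∧ ∀ n : ℤ,
      ‖c n‖ ≤ C * Real.exp (-(|n| * (R+1))) := by
    intro R hR
    obtain ⟨C, hC0, hCb⟩ := coeff_bound f hf_hol hf_per R hR
    refine ⟨C / (2*π), by positivity, fun n => ?_⟩
    rw [hc n, norm_mul]
    have h1 : ‖(1/(2*(π:ℂ)))‖ = 1/(2*π) := by
      rw [norm_div, norm_one]
      congr 1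
      rw [show (2*(π:ℂ)) = ((2*π : ℝ) : ℂ) by push_cast; ring, Complex.norm_real,
        Real.norm_of_nonneg (by positivity)]
    rw [h1]
    calc 1/(2*π) * ‖∫ x in (0:ℝ)..2*π, Complex.exp (-(Complex.I * n * x)) * f x‖
        ≤ 1/(2*π) * (C * Real.exp (-(|n| * (R+1)))) := by
          apply mul_le_mul_of_nonneg_left (hCb n) (by positivity)
      _ = C / (2*π) * Real.exp (-(|n| * (R+1))) := by ring
  -- summability of the coefficients
  have hsum : Summable (fun n => fourierCoeff ((Fc : C(AddCircle (2*π), ℂ)) : AddCircle (2*π) → ℂ) n) := by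
    obtain ⟨C, hC0, hCb⟩ := hcb 0 le_rfl
    apply Summable.of_norm_bounded (g := fun n : ℤ => C * Real.exp (-(|n| * 1)))
      ((summable_exp_abs 1 one_pos).mul_left C)
    intro n
    have := hCb n
    rw [hcdef] at this
    simpa using this
  -- uniform convergence on compacts
  have key : ∀ (K : Set ℂ), IsCompact K → TendstoUniformlyOn
      (fun (s : Finset ℤ) (z : ℂ) => ∑ n ∈ s, c n * Complex.exp (Complex.I * n * z))
      (fun z => ∑' n : ℤ, c n * Complex.exp (Complex.I * n * z)) atTop K := by
    intro K hK
    obtain ⟨r, hr⟩ := hK.isBounded.subset_closedBall 0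
    set R := max r 0 with hRdef
    obtain ⟨C, hC0, hCb⟩ := hcb R (le_max_right _ _)
    apply tendstoUniformlyOn_tsum (u := fun n : ℤ => C * Real.exp (-(|n| * 1)))
      ((summable_exp_abs 1 one_pos).mul_left C)
    intro n z hz
    have hzn : ‖z‖ ≤ R := by
      have h5 := hr hz
      rw [Metric.mem_closedBall, dist_zero_right] at h5
      exact h5.trans (le_max_left r 0)
    have hzim : |z.im| ≤ R := (Complex.abs_im_le_norm z).trans hzn
    have hexp : ‖Complex.exp (Complex.I * n * z)‖ ≤ Real.exp (((|n| : ℤ) : ℝ) * R) := by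
      rw [Complex.norm_exp]
      apply Real.exp_le_exp.mpr
      have h4 : (Complex.I * (n : ℂ) * z).re = -((n:ℝ) * z.im) := by
        simp [Complex.mul_re, Complex.mul_im]
      rw [h4]
      calc -((n:ℝ)*z.im) ≤ |(n:ℝ)*z.im| := neg_le_abs _
        _ = |(n:ℝ)| * |z.im| := abs_mul _ _
        _ ≤ |(n:ℝ)| * R := mul_le_mul_of_nonneg_left hzim (abs_nonneg _)
        _ = ((|n| : ℤ) : ℝ) * R := by rw [Int.cast_abs]
    rw [norm_mul]
    calc ‖c n‖ * ‖Complex.exp (Complex.I * n * z)‖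
        ≤ (C * Real.exp (-(((|n| : ℤ) : ℝ)*(R+1)))) * Real.exp (((|n| : ℤ) : ℝ)*R) :=
          mul_le_mul (hCb n) hexp (norm_nonneg _) (by positivity)
      _ = C * Real.exp (-(((|n| : ℤ) : ℝ) * 1)) := by
          rw [mul_assoc, ← Real.exp_add]
          congr 2
          ring
  have hTLU : TendstoLocallyUniformly
      (fun (s : Finset ℤ) (z : ℂ) => ∑ n ∈ s, c n * Complex.exp (Complex.I * n * z))
      (fun z => ∑' n : ℤ, c n * Complex.exp (Complex.I * n * z)) atTop :=
    tendstoLocallyUniformly_iff_forall_isCompact.mpr key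
  -- the limit is differentiable
  have hgdiff : Differentiable ℂ (fun z => ∑' n : ℤ, c n * Complex.exp (Complex.I * n * z)) := by
    rw [← differentiableOn_univ]
    refine ((tendstoLocallyUniformlyOn_univ).mpr hTLU).differentiableOn
      (Eventually.of_forall fun s => ?_) isOpen_univ
    apply Differentiable.differentiableOn
    apply Differentiable.fun_sum
    intro i _
    apply Differentiable.const_mul
    apply Complex.differentiable_exp.comp
    fun_prop
  -- equality with f on part of the real axis
  have hre : ∀ x : ℝ, x ∈ Set.Ico (0:ℝ) (2*π) →
      f x = ∑' n : ℤ, c n * Complex.exp (Complex.I * n * x) := by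
    intro x hx
    have hp := has_pointwise_sum_fourier_series_of_summable hsum ((x : ℝ) : AddCircle (2*π))
    have h1 : Fc ((x : ℝ) : AddCircle (2*π)) = f x := by
      show AddCircle.liftIco (2*π) 0 (fun x : ℝ => f x) ↑x = f ↑x
      exact AddCircle.liftIco_zero_coe_apply hx
    rw [← h1, ← hp.tsum_eq]
    apply tsum_congr
    intro i
    rw [smul_eq_mul]
    congr 1
    rw [fourier_coe_apply]
    congr 1
    push_cast
    field_simp [Complex.ofReal_ne_zero.mpr Real.pi_ne_zero]
  -- identity theorem
  have hfeq : f = fun z => ∑' n : ℤ, c n * Complex.exp (Complex.I * n * z) := by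
    have hfa : AnalyticOnNhd ℂ f Set.univ := Complex.analyticOnNhd_univ_iff_differentiable.mpr hf_hol
    have hga : AnalyticOnNhd ℂ (fun z => ∑' n : ℤ, c n * Complex.exp (Complex.I * n * z)) Set.univ :=
      Complex.analyticOnNhd_univ_iff_differentiable.mpr hgdiff
    have hfreq : ∃ᶠ z in nhdsWithin ((π : ℝ) : ℂ) {((π : ℝ) : ℂ)}ᶜ,
        f z = ∑' n : ℤ, c n * Complex.exp (Complex.I * n * z) := by
      have htend : Tendsto (fun k : ℕ => ((π + 1/(k+1) : ℝ) : ℂ)) atTop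
          (nhdsWithin ((π : ℝ) : ℂ) {((π : ℝ) : ℂ)}ᶜ) := by
        apply tendsto_nhdsWithin_of_tendsto_nhds_of_eventually_within
        · have h0 : Tendsto (fun k : ℕ => (π + 1/(k+1) : ℝ)) atTop (nhds π) := by
            have := tendsto_one_div_add_atTop_nhds_zero_nat (𝕜 := ℝ)
            have h2 := (tendsto_const_nhds : Tendsto (fun _ : ℕ => π) atTop (nhds π)).add this
            simpa using h2
          exact ((Complex.continuous_ofReal.tendsto π).comp h0)
        · apply Eventually.of_forall
          intro k
          simp only [Set.mem_compl_iff, Set.mem_singleton_iff]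
          intro hcontra
          have h3 : (π + 1/((k:ℝ)+1)) = π := Complex.ofReal_injective hcontra
          have hpos : 0 < 1/((k:ℝ)+1) := by positivity
          linarith
      apply htend.frequently
      apply Frequently.of_forall
      intro k
      apply hre
      constructor
      · positivity
      · have hk1 : 1/((k:ℝ)+1) ≤ 1 := by
          rw [div_le_one (by positivity)]; linarith [Nat.cast_nonneg (α := ℝ) k]
        nlinarith [Real.pi_gt_three]
    have heqOn := hfa.eqOn_of_preconnected_of_frequently_eq hga isPreconnected_univ
      (Set.mem_univ ((π : ℝ) : ℂ)) hfreq
    funext z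
    exact heqOn (Set.mem_univ z)
  refine ⟨c, ?_⟩
  rw [hfeq]
  exact hTLU
end

section
/- Let H_P be the Hilbert space of 2π-periodic (in the real direction) entire functions square integrable against (1/(2π)) e^{-|z|²} dz, and define the creation operator a⁺ as the orthogonal projection onto H_P of multiplication by z, and the annihilation operator a as differentiation: (aχ)(z) = χ'(z). Then a⁺ and a are mutually adjoint: ⟨a⁺ψ, χ⟩ = ⟨ψ, aχ⟩ for all ψ, χ ∈ H_P for which both sides are defined. -/
open MeasureTheory Complex Real

set_option maxHeartbeats 1000000

section CAAuxiliary
open Filter Set Topology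
open scoped ENNReal NNReal

lemma CA_per_int {f : ℂ → ℂ} (hper : ∀ z, f (z + 2 * π) = f z) :
    ∀ (n : ℤ) (z : ℂ), f (z + n * (2 * π)) = f z := by
  intro n
  induction n using Int.induction_on with
  | zero => simp
  | succ k ih =>
    intro z
    have h1 : z + ((k + 1 : ℤ) : ℂ) * (2 * π) = (z + (k : ℤ) * (2 * π)) + 2 * π := by
      push_cast; ring
    rw [h1, hper, ih]
  | pred k ih =>
    intro z
    have h1 : (z + ((-k - 1 : ℤ) : ℂ) * (2 * π)) + 2 * π = z + ((-k : ℤ) : ℂ) * (2 * π) := by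
      push_cast; ring
    have := hper (z + ((-k - 1 : ℤ) : ℂ) * (2 * π))
    rw [h1] at this
    rw [← this, ih]

lemma CA_strip_bound {f : ℂ → ℂ} (hf : Continuous f) (hper : ∀ z, f (z + 2 * π) = f z)
    (a b : ℝ) : ∃ C : ℝ, 0 ≤ C ∧ ∀ z : ℂ, z.im ∈ Set.Icc a b → ‖f z‖ ≤ C := by
  have hcont : Continuous fun p : ℝ × ℝ => f (p.1 + p.2 * I) := by continuity
  obtain ⟨C, hC⟩ := (IsCompact.prod isCompact_Icc isCompact_Icc :
      IsCompact (Icc (0:ℝ) (2*π) ×ˢ Icc a b)).exists_bound_of_continuousOn hcont.continuousOn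
  refine ⟨max C 0, le_max_right _ _, fun z hz => ?_⟩
  have h2π : (0:ℝ) < 2 * π := by positivity
  set n : ℤ := ⌊z.re / (2 * π)⌋ with hn
  have h0 : 0 ≤ z.re - n * (2 * π) := Int.sub_floor_div_mul_nonneg z.re h2π
  have h1 : z.re - n * (2 * π) < 2 * π := Int.sub_floor_div_mul_lt z.re h2π
  have key : f z = f ((z.re - n * (2 * π) : ℝ) + (z.im : ℝ) * I) := by
    have h2 := CA_per_int hper n (((z.re - n * (2 * π) : ℝ) : ℂ) + (z.im : ℝ) * I)
    rw [← h2]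
    congr 1
    have h3 := Complex.re_add_im z
    conv_lhs => rw [← h3]
    push_cast
    ring
  rw [key]
  exact le_max_of_le_left (hC ((z.re - n * (2*π), z.im)) ⟨⟨h0, h1.le⟩, hz⟩)

lemma CA_hasDerivAt_slice_x {g : ℂ → ℂ} (hg : Differentiable ℂ g) (x y : ℝ) :
    HasDerivAt (fun t : ℝ => g (t + y * I)) (deriv g (x + y * I)) x := by
  have h1 : HasDerivAt (fun w : ℂ => g (w + (y : ℂ) * I)) (deriv g ((x : ℂ) + y * I)) (x : ℂ) :=
    HasDerivAt.comp_add_const _ _ ((hg _).hasDerivAt)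
  exact h1.comp_ofReal

lemma CA_hasDerivAt_slice_y {g : ℂ → ℂ} (hg : Differentiable ℂ g) (x y : ℝ) :
    HasDerivAt (fun t : ℝ => g (x + t * I)) (I * deriv g (x + y * I)) y := by
  have hin : HasDerivAt (fun w : ℂ => (x : ℂ) + w * I) I (y : ℂ) := by
    simpa using ((hasDerivAt_id ((y : ℝ) : ℂ)).mul_const I).const_add (x : ℂ)
  have h1 : HasDerivAt (fun w : ℂ => g ((x : ℂ) + w * I)) (deriv g ((x : ℂ) + y * I) * I) (y : ℂ) :=
    HasDerivAt.comp _ ((hg _).hasDerivAt) hin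
  simpa [mul_comm] using h1.comp_ofReal

lemma CA_hasDerivAt_conj {f : ℝ → ℂ} {f' : ℂ} {t : ℝ} (h : HasDerivAt f f' t) :
    HasDerivAt (fun s => (starRingEnd ℂ) (f s)) ((starRingEnd ℂ) f') t := by
  exact h.star

lemma CA_hasDerivAt_exp_x (x y : ℝ) :
    HasDerivAt (fun t : ℝ => ((Real.exp (-t ^ 2 - y ^ 2) : ℝ) : ℂ))
      (((-2 * x) * Real.exp (-x ^ 2 - y ^ 2) : ℝ) : ℂ) x := by
  have h1 : HasDerivAt (fun t : ℝ => -t ^ 2 - y ^ 2) (-2 * x) x := by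
    exact (((hasDerivAt_pow 2 x).neg).sub_const (y ^ 2)).congr_deriv (by norm_num)
  have := (h1.exp).ofReal_comp
  convert this using 2
  ring

lemma CA_hasDerivAt_exp_y (x y : ℝ) :
    HasDerivAt (fun t : ℝ => ((Real.exp (-x ^ 2 - t ^ 2) : ℝ) : ℂ))
      (((-2 * y) * Real.exp (-x ^ 2 - y ^ 2) : ℝ) : ℂ) y := by
  have h1 : HasDerivAt (fun t : ℝ => -x ^ 2 - t ^ 2) (-2 * y) y := by
    exact ((hasDerivAt_pow 2 y).const_sub (-x ^ 2)).congr_deriv (by norm_num)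
  have := (h1.exp).ofReal_comp
  convert this using 2
  ring

lemma CA_integrable_dom {g : ℝ → ℂ} (hc : Continuous g) {C : ℝ}
    (hb : ∀ x, ‖g x‖ ≤ C * ((1 + |x|) * Real.exp (-x ^ 2))) : Integrable g := by
  have h1 : Integrable (fun x : ℝ => Real.exp (-x ^ 2)) := by
    simpa using integrable_exp_neg_mul_sq (b := 1) one_pos
  have h2 : Integrable (fun x : ℝ => |x| * Real.exp (-x ^ 2)) := by
    have h3 : Integrable (fun x : ℝ => x * Real.exp (-x ^ 2)) := by
      simpa using integrable_mul_exp_neg_mul_sq (b := 1) one_pos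
    have h4 := h3.abs
    refine h4.congr (Eventually.of_forall fun x => ?_)
    simp only
    rw [abs_mul, abs_of_pos (Real.exp_pos _)]
  have h5 : Integrable (fun x : ℝ => C * ((1 + |x|) * Real.exp (-x ^ 2))) := by
    have := (h1.add h2).const_mul C
    refine this.congr (Eventually.of_forall fun x => ?_)
    simp only [Pi.add_apply]
    ring
  exact Integrable.mono' h5 hc.aestronglyMeasurable (Eventually.of_forall hb)

lemma CA_lim_zero_atTop {f : ℝ → ℂ} {L : ℂ} (hf : Integrable f)
    (h : Tendsto f atTop (𝓝 L)) : L = 0 := by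
  by_contra hL
  have hc : 0 < ‖L‖ / 2 := by
    have := norm_pos_iff.mpr hL; linarith
  have hev : ∀ᶠ x in atTop, ‖L‖ / 2 ≤ ‖f x‖ := by
    have hn : Tendsto (fun x => ‖f x‖) atTop (𝓝 ‖L‖) := h.norm
    exact hn.eventually (eventually_ge_nhds (by linarith))
  obtain ⟨A, hA⟩ := eventually_atTop.mp hev
  have hfin : (∫⁻ x in Ioi A, (‖f x‖₊ : ℝ≥0∞)) < ⊤ := hf.integrableOn.hasFiniteIntegral
  have hge : (ENNReal.ofReal (‖L‖ / 2)) * volume (Ioi A) ≤ ∫⁻ x in Ioi A, (‖f x‖₊ : ℝ≥0∞) := by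
    rw [← setLIntegral_const]
    refine lintegral_mono_ae ?_
    filter_upwards [ae_restrict_mem measurableSet_Ioi] with x hx
    rw [← enorm_eq_nnnorm, ← ofReal_norm]
    exact ENNReal.ofReal_le_ofReal (hA x (le_of_lt hx))
  rw [Real.volume_Ioi, ENNReal.mul_top (by simpa using hc.ne')] at hge
  exact absurd hfin (not_lt.mpr hge)

lemma CA_lim_zero_atBot {f : ℝ → ℂ} {L : ℂ} (hf : Integrable f)
    (h : Tendsto f atBot (𝓝 L)) : L = 0 := by
  have h2 : Tendsto (fun x => f (-x)) atTop (𝓝 L) := h.comp tendsto_neg_atTop_atBot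
  exact CA_lim_zero_atTop (hf.comp_neg) h2

lemma CA_integral_deriv_zero {f f' : ℝ → ℂ} (hd : ∀ x, HasDerivAt f (f' x) x)
    (hf' : Integrable f') (hf : Integrable f) : ∫ x, f' x = 0 := by
  have hT : Tendsto f atTop (𝓝 (limUnder atTop f)) :=
    tendsto_limUnder_of_hasDerivAt_of_integrableOn_Ioi (a := 0)
      (fun x _ => hd x) hf'.integrableOn
  have hB : Tendsto f atBot (𝓝 (limUnder atBot f)) :=
    tendsto_limUnder_of_hasDerivAt_of_integrableOn_Iic (a := 0)
      (fun x _ => hd x) hf'.integrableOn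
  have hT0 : limUnder atTop f = 0 := CA_lim_zero_atTop hf hT
  have hB0 : limUnder atBot f = 0 := CA_lim_zero_atBot hf hB
  rw [hT0] at hT; rw [hB0] at hB
  have h1 : ∫ x in Ioi (0:ℝ), f' x = 0 - f 0 :=
    integral_Ioi_of_hasDerivAt_of_tendsto' (fun x _ => hd x) hf'.integrableOn hT
  have h2 : ∫ x in Iic (0:ℝ), f' x = f 0 - 0 :=
    integral_Iic_of_hasDerivAt_of_tendsto' (fun x _ => hd x) hf'.integrableOn hB
  rw [← intervalIntegral.integral_Iic_add_Ioi hf'.integrableOn hf'.integrableOn, h1, h2]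
  ring

lemma CA_norm_sq (x y : ℝ) : ‖(x : ℂ) + y * I‖ ^ 2 = x ^ 2 + y ^ 2 := by
  rw [Complex.sq_norm, Complex.normSq_add_mul_I]

lemma CA_transfer (f : ℂ → ℂ) (hf : Integrable f) :
    ∫ z : ℂ, f z = ∫ y : ℝ, ∫ x : ℝ, f ((x : ℂ) + y * I) := by
  rw [← (Complex.volume_preserving_equiv_real_prod.symm).integral_comp
    Complex.measurableEquivRealProd.symm.measurableEmbedding f]
  have hf2 : Integrable (fun p : ℝ × ℝ => f ((p.1 : ℂ) + p.2 * I)) := by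
    have := ((Complex.volume_preserving_equiv_real_prod.symm).integrable_comp_emb
      Complex.measurableEquivRealProd.symm.measurableEmbedding).mpr hf
    refine this.congr (Eventually.of_forall fun p => ?_)
    simp [Function.comp, Complex.measurableEquivRealProd_symm_apply, Complex.mk_eq_add_mul_I]
  have h3 : ∀ p : ℝ × ℝ, f (Complex.measurableEquivRealProd.symm p) = f ((p.1 : ℂ) + p.2 * I) := by
    intro p; rw [Complex.measurableEquivRealProd_symm_apply, Complex.mk_eq_add_mul_I]
  simp_rw [h3]
  rw [show (volume : Measure (ℝ × ℝ)) = (volume : Measure ℝ).prod volume from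
    (MeasureTheory.Measure.volume_eq_prod ℝ ℝ)]
  exact integral_prod_symm _ (by rw [← MeasureTheory.Measure.volume_eq_prod]; exact hf2)

lemma CA_transfer_integrable (f : ℂ → ℂ) (hf : Integrable f) :
    Integrable (fun p : ℝ × ℝ => f ((p.1 : ℂ) + p.2 * I)) ((volume : Measure ℝ).prod volume) := by
  rw [← MeasureTheory.Measure.volume_eq_prod]
  have := ((Complex.volume_preserving_equiv_real_prod.symm).integrable_comp_emb
    Complex.measurableEquivRealProd.symm.measurableEmbedding).mpr hf
  refine this.congr (Eventually.of_forall fun p => ?_)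
  simp [Function.comp, Complex.measurableEquivRealProd_symm_apply, Complex.mk_eq_add_mul_I]

lemma CA_bound_integrable (C : ℝ) :
    Integrable (fun x : ℝ => C * ((1 + |x|) * Real.exp (-x ^ 2))) := by
  have h1 : Integrable (fun x : ℝ => Real.exp (-x ^ 2)) := by
    simpa using integrable_exp_neg_mul_sq (b := 1) one_pos
  have h2 : Integrable (fun x : ℝ => |x| * Real.exp (-x ^ 2)) := by
    have h3 : Integrable (fun x : ℝ => x * Real.exp (-x ^ 2)) := by
      simpa using integrable_mul_exp_neg_mul_sq (b := 1) one_pos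
    refine h3.abs.congr (Eventually.of_forall fun x => ?_)
    simp only
    rw [abs_mul, abs_of_pos (Real.exp_pos _)]
  have := (h1.add h2).const_mul C
  refine this.congr (Eventually.of_forall fun x => ?_)
  simp only [Pi.add_apply]
  ring

lemma CA_exp_bound (x y : ℝ) : Real.exp (-x ^ 2 - y ^ 2) ≤ (1 + |x|) * Real.exp (-x ^ 2) := by
  have h1 : Real.exp (-x ^ 2 - y ^ 2) ≤ Real.exp (-x ^ 2) :=
    Real.exp_le_exp.mpr (by nlinarith [sq_nonneg y])
  nlinarith [Real.exp_pos (-x ^ 2), abs_nonneg x]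

lemma CA_deriv_per {g : ℂ → ℂ} (hper : ∀ z, g (z + 2 * π) = g z) :
    ∀ z, deriv g (z + 2 * π) = deriv g z := by
  intro z
  have h1 : deriv (fun w : ℂ => g (w + 2 * π)) z = deriv g (z + 2 * π) := deriv_comp_add_const g _ z
  have h2 : (fun w : ℂ => g (w + 2 * π)) = g := funext hper
  rw [← h1, h2]

lemma CA_deriv_cont {g : ℂ → ℂ} (hg : Differentiable ℂ g) : Continuous (deriv g) :=
  (hg.contDiff (n := 2)).continuous_deriv (by norm_num)

lemma CA_ibp (ψ χ : ℂ → ℂ) (hψd : Differentiable ℂ ψ) (hψp : ∀ z, ψ (z + 2 * π) = ψ z)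
    (hψ2 : Integrable (fun z : ℂ => ‖ψ z‖ ^ 2 * Real.exp (-‖z‖ ^ 2)))
    (hχd : Differentiable ℂ χ) (hχp : ∀ z, χ (z + 2 * π) = χ z)
    (hχ2 : Integrable (fun z : ℂ => ‖χ z‖ ^ 2 * Real.exp (-‖z‖ ^ 2)))
    (hzψ_L2 : Integrable (fun z : ℂ => ‖z * ψ z‖ ^ 2 * Real.exp (-‖z‖ ^ 2)))
    (h_rhs : Integrable (fun z : ℂ => (starRingEnd ℂ) (ψ z) * deriv χ z * Real.exp (-‖z‖ ^ 2))) :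
    ∫ z : ℂ, (starRingEnd ℂ) (z * ψ z) * χ z * Real.exp (-‖z‖ ^ 2)
      = ∫ z : ℂ, (starRingEnd ℂ) (ψ z) * deriv χ z * Real.exp (-‖z‖ ^ 2) := by
  have hψc : Continuous ψ := hψd.continuous
  have hχc : Continuous χ := hχd.continuous
  have hψ'c : Continuous (deriv ψ) := CA_deriv_cont hψd
  have hχ'c : Continuous (deriv χ) := CA_deriv_cont hχd
  have hψ'p := CA_deriv_per hψp
  have hχ'p := CA_deriv_per hχp
  -- the function under the divergence, and its partial derivatives
  set G : ℝ → ℝ → ℂ := fun x y => (starRingEnd ℂ) (ψ (x + y * I)) * χ (x + y * I) *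
    ((Real.exp (-x ^ 2 - y ^ 2) : ℝ) : ℂ) with hGdef
  set Gx : ℝ → ℝ → ℂ := fun x y =>
    ((starRingEnd ℂ) (deriv ψ (x + y * I)) * χ (x + y * I)
      + (starRingEnd ℂ) (ψ (x + y * I)) * deriv χ (x + y * I)) *
        ((Real.exp (-x ^ 2 - y ^ 2) : ℝ) : ℂ)
      + (starRingEnd ℂ) (ψ (x + y * I)) * χ (x + y * I) *
        (((-2 * x) * Real.exp (-x ^ 2 - y ^ 2) : ℝ) : ℂ) with hGxdef
  set Gy : ℝ → ℝ → ℂ := fun x y =>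
    ((starRingEnd ℂ) (I * deriv ψ (x + y * I)) * χ (x + y * I)
      + (starRingEnd ℂ) (ψ (x + y * I)) * (I * deriv χ (x + y * I))) *
        ((Real.exp (-x ^ 2 - y ^ 2) : ℝ) : ℂ)
      + (starRingEnd ℂ) (ψ (x + y * I)) * χ (x + y * I) *
        (((-2 * y) * Real.exp (-x ^ 2 - y ^ 2) : ℝ) : ℂ) with hGydef
  have hGx : ∀ x y : ℝ, HasDerivAt (fun t => G t y) (Gx x y) x := fun x y =>
    ((CA_hasDerivAt_conj (CA_hasDerivAt_slice_x hψd x y)).mul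
      (CA_hasDerivAt_slice_x hχd x y)).mul (CA_hasDerivAt_exp_x x y)
  have hGy : ∀ x y : ℝ, HasDerivAt (fun t => G x t) (Gy x y) y := fun x y =>
    ((CA_hasDerivAt_conj (CA_hasDerivAt_slice_y hψd x y)).mul
      (CA_hasDerivAt_slice_y hχd x y)).mul (CA_hasDerivAt_exp_y x y)
  set D : ℂ → ℂ := fun z => (starRingEnd ℂ) (ψ z) * deriv χ z * (Real.exp (-‖z‖ ^ 2) : ℝ)
    - (starRingEnd ℂ) (z * ψ z) * χ z * (Real.exp (-‖z‖ ^ 2) : ℝ) with hDdef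
  have hexp_eq : ∀ x y : ℝ, Real.exp (-‖(x : ℂ) + y * I‖ ^ 2) = Real.exp (-x ^ 2 - y ^ 2) := by
    intro x y; rw [CA_norm_sq]; ring_nf
  have hDident : ∀ x y : ℝ, D ((x : ℂ) + y * I) = (1 / 2 : ℂ) * Gx x y - (I / 2) * Gy x y := by
    intro x y
    simp only [hDdef, hGxdef, hGydef, hexp_eq, map_mul, map_add, Complex.conj_I,
      Complex.conj_ofReal]
    push_cast
    ring_nf
    simp only [Complex.I_sq]
    ring
  -- joint integrability facts over ℂ
  have hmeas_exp : Continuous fun z : ℂ => ((Real.exp (-‖z‖ ^ 2) : ℝ) : ℂ) := by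
    exact Complex.continuous_ofReal.comp (Real.continuous_exp.comp (by fun_prop))
  have hprod : Integrable (fun z : ℂ =>
      (starRingEnd ℂ) (z * ψ z) * χ z * (Real.exp (-‖z‖ ^ 2) : ℝ)) := by
    refine Integrable.mono'
      (g := fun z => (1 / 2 : ℝ) * (‖z * ψ z‖ ^ 2 * Real.exp (-‖z‖ ^ 2)
        + ‖χ z‖ ^ 2 * Real.exp (-‖z‖ ^ 2))) ((hzψ_L2.add hχ2).const_mul _) ?_ ?_
    · exact (((Complex.continuous_conj.comp (continuous_id.mul hψc)).mul hχc).mul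
        hmeas_exp).aestronglyMeasurable
    · refine Eventually.of_forall fun z => ?_
      have he := Real.exp_pos (-‖z‖ ^ 2)
      have h1 : ‖(starRingEnd ℂ) (z * ψ z) * χ z * ((Real.exp (-‖z‖ ^ 2) : ℝ) : ℂ)‖
          = ‖z * ψ z‖ * ‖χ z‖ * Real.exp (-‖z‖ ^ 2) := by
        rw [norm_mul, norm_mul, RCLike.norm_conj, Complex.norm_real, Real.norm_eq_abs,
          Real.abs_exp]
      rw [h1]
      nlinarith [mul_nonneg (sq_nonneg (‖z * ψ z‖ - ‖χ z‖)) he.le]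
  have hGC : Integrable (fun z : ℂ =>
      (starRingEnd ℂ) (ψ z) * χ z * (Real.exp (-‖z‖ ^ 2) : ℝ)) := by
    refine Integrable.mono'
      (g := fun z => (1 / 2 : ℝ) * (‖ψ z‖ ^ 2 * Real.exp (-‖z‖ ^ 2)
        + ‖χ z‖ ^ 2 * Real.exp (-‖z‖ ^ 2))) ((hψ2.add hχ2).const_mul _) ?_ ?_
    · exact (((Complex.continuous_conj.comp hψc).mul hχc).mul hmeas_exp).aestronglyMeasurable
    · refine Eventually.of_forall fun z => ?_
      have he := Real.exp_pos (-‖z‖ ^ 2)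
      have h1 : ‖(starRingEnd ℂ) (ψ z) * χ z * ((Real.exp (-‖z‖ ^ 2) : ℝ) : ℂ)‖
          = ‖ψ z‖ * ‖χ z‖ * Real.exp (-‖z‖ ^ 2) := by
        rw [norm_mul, norm_mul, RCLike.norm_conj, Complex.norm_real, Real.norm_eq_abs,
          Real.abs_exp]
      rw [h1]
      nlinarith [mul_nonneg (sq_nonneg (‖ψ z‖ - ‖χ z‖)) he.le]
  have hD : Integrable D := h_rhs.sub hprod
  -- strip bounds
  have hbound : ∀ a b : ℝ, ∃ C : ℝ, 0 ≤ C ∧ ∀ z : ℂ, z.im ∈ Icc a b →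
      ‖ψ z‖ ≤ C ∧ ‖deriv ψ z‖ ≤ C ∧ ‖χ z‖ ≤ C ∧ ‖deriv χ z‖ ≤ C := by
    intro a b
    obtain ⟨C1, h1n, h1⟩ := CA_strip_bound hψc hψp a b
    obtain ⟨C2, h2n, h2⟩ := CA_strip_bound hψ'c hψ'p a b
    obtain ⟨C3, h3n, h3⟩ := CA_strip_bound hχc hχp a b
    obtain ⟨C4, h4n, h4⟩ := CA_strip_bound hχ'c hχ'p a b
    refine ⟨max (max C1 C2) (max C3 C4), by positivity, fun z hz => ⟨?_, ?_, ?_, ?_⟩⟩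
    · exact (h1 z hz).trans (le_max_of_le_left (le_max_left _ _))
    · exact (h2 z hz).trans (le_max_of_le_left (le_max_right _ _))
    · exact (h3 z hz).trans (le_max_of_le_right (le_max_left _ _))
    · exact (h4 z hz).trans (le_max_of_le_right (le_max_right _ _))
  have him : ∀ x y : ℝ, ((x : ℂ) + y * I).im = y := by intro x y; simp
  -- norm bounds for G, Gx, Gy in terms of a strip constant
  have hGnorm : ∀ (C : ℝ) (x y : ℝ), 0 ≤ C →
      (∀ z : ℂ, z.im ∈ Icc y y → ‖ψ z‖ ≤ C ∧ ‖deriv ψ z‖ ≤ C ∧ ‖χ z‖ ≤ C ∧ ‖deriv χ z‖ ≤ C) →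
      ‖G x y‖ ≤ (C * C) * ((1 + |x|) * Real.exp (-x ^ 2)) := by
    intro C x y hC hb
    obtain ⟨b1, b2, b3, b4⟩ := hb ((x : ℂ) + y * I) (by rw [him x y]; exact ⟨le_rfl, le_rfl⟩)
    have he := Real.exp_pos (-x ^ 2 - y ^ 2)
    have hee := CA_exp_bound x y
    have h1 : ‖G x y‖ = ‖ψ ((x : ℂ) + y * I)‖ * ‖χ ((x : ℂ) + y * I)‖
        * Real.exp (-x ^ 2 - y ^ 2) := by
      rw [hGdef]
      rw [norm_mul, norm_mul, RCLike.norm_conj, Complex.norm_real, Real.norm_eq_abs,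
        Real.abs_exp]
    rw [h1]
    have hn1 : (0:ℝ) ≤ ‖ψ ((x : ℂ) + y * I)‖ := norm_nonneg _
    have hn2 : (0:ℝ) ≤ ‖χ ((x : ℂ) + y * I)‖ := norm_nonneg _
    nlinarith [mul_le_mul b1 b3 hn2 hC, mul_nonneg (mul_nonneg hC hC) he.le,
      mul_le_mul_of_nonneg_left hee (mul_nonneg hC hC)]
  have hE_le : ∀ x y : ℝ, Real.exp (-x ^ 2 - y ^ 2) ≤ Real.exp (-x ^ 2) := by
    intro x y; exact Real.exp_le_exp.mpr (by nlinarith [sq_nonneg y])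
  have hGxnorm : ∀ (C : ℝ) (x y : ℝ), 0 ≤ C →
      (‖ψ ((x:ℂ) + y*I)‖ ≤ C ∧ ‖deriv ψ ((x:ℂ) + y*I)‖ ≤ C ∧ ‖χ ((x:ℂ) + y*I)‖ ≤ C ∧
        ‖deriv χ ((x:ℂ) + y*I)‖ ≤ C) →
      ‖Gx x y‖ ≤ (2 * (C * C)) * ((1 + |x|) * Real.exp (-x ^ 2)) := by
    intro C x y hC hb
    obtain ⟨b1, b2, b3, b4⟩ := hb
    set z : ℂ := (x : ℂ) + y * I with hz
    set E : ℝ := Real.exp (-x ^ 2 - y ^ 2) with hE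
    have heE : (0:ℝ) < E := Real.exp_pos _
    have step1 : ‖Gx x y‖ ≤ (‖deriv ψ z‖ * ‖χ z‖ + ‖ψ z‖ * ‖deriv χ z‖) * E
        + ‖ψ z‖ * ‖χ z‖ * (2 * |x| * E) := by
      rw [hGxdef]
      refine (norm_add_le _ _).trans ?_
      have e1 : ‖((starRingEnd ℂ) (deriv ψ z) * χ z + (starRingEnd ℂ) (ψ z) * deriv χ z)
          * ((E : ℝ) : ℂ)‖ ≤ (‖deriv ψ z‖ * ‖χ z‖ + ‖ψ z‖ * ‖deriv χ z‖) * E := by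
        rw [norm_mul, Complex.norm_real, Real.norm_eq_abs, hE, Real.abs_exp]
        refine mul_le_mul_of_nonneg_right ?_ heE.le
        refine (norm_add_le _ _).trans ?_
        rw [norm_mul, norm_mul, RCLike.norm_conj, RCLike.norm_conj]
      have e2 : ‖(starRingEnd ℂ) (ψ z) * χ z * (((-2 * x) * E : ℝ) : ℂ)‖
          ≤ ‖ψ z‖ * ‖χ z‖ * (2 * |x| * E) := by
        rw [norm_mul, norm_mul, RCLike.norm_conj, Complex.norm_real, Real.norm_eq_abs,
          abs_mul, abs_mul, abs_neg, hE, Real.abs_exp]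
        norm_num
      exact add_le_add e1 e2
    have e3 : ‖deriv ψ z‖ * ‖χ z‖ ≤ C * C := mul_le_mul b2 b3 (norm_nonneg _) hC
    have e4 : ‖ψ z‖ * ‖deriv χ z‖ ≤ C * C := mul_le_mul b1 b4 (norm_nonneg _) hC
    have e5 : ‖ψ z‖ * ‖χ z‖ ≤ C * C := mul_le_mul b1 b3 (norm_nonneg _) hC
    have hEe : E ≤ Real.exp (-x ^ 2) := hE_le x y
    have hex := Real.exp_pos (-x ^ 2)
    refine step1.trans ?_
    have goal2 : (‖deriv ψ z‖ * ‖χ z‖ + ‖ψ z‖ * ‖deriv χ z‖) * E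
        + ‖ψ z‖ * ‖χ z‖ * (2 * |x| * E) ≤ (2 * (C * C)) * ((1 + |x|) * E) := by
      nlinarith [abs_nonneg x, heE.le, mul_nonneg (mul_nonneg (norm_nonneg (ψ z)) (norm_nonneg (χ z))) (abs_nonneg x), mul_le_mul_of_nonneg_right e5 (abs_nonneg x)]
    refine goal2.trans ?_
    have : (1 + |x|) * E ≤ (1 + |x|) * Real.exp (-x ^ 2) :=
      mul_le_mul_of_nonneg_left hEe (by positivity)
    nlinarith [mul_nonneg hC hC]
  have hGynorm : ∀ (C T x y : ℝ), 0 ≤ C → 0 ≤ T → |y| ≤ T →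
      (‖ψ ((x:ℂ) + y*I)‖ ≤ C ∧ ‖deriv ψ ((x:ℂ) + y*I)‖ ≤ C ∧ ‖χ ((x:ℂ) + y*I)‖ ≤ C ∧
        ‖deriv χ ((x:ℂ) + y*I)‖ ≤ C) →
      ‖Gy x y‖ ≤ ((2 + 2 * T) * (C * C)) * ((1 + |x|) * Real.exp (-x ^ 2)) := by
    intro C T x y hC hT hyT hb
    obtain ⟨b1, b2, b3, b4⟩ := hb
    set z : ℂ := (x : ℂ) + y * I with hz
    set E : ℝ := Real.exp (-x ^ 2 - y ^ 2) with hE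
    have heE : (0:ℝ) < E := Real.exp_pos _
    have step1 : ‖Gy x y‖ ≤ (‖deriv ψ z‖ * ‖χ z‖ + ‖ψ z‖ * ‖deriv χ z‖) * E
        + ‖ψ z‖ * ‖χ z‖ * (2 * |y| * E) := by
      rw [hGydef]
      refine (norm_add_le _ _).trans ?_
      have e1 : ‖((starRingEnd ℂ) (I * deriv ψ z) * χ z + (starRingEnd ℂ) (ψ z) * (I * deriv χ z))
          * ((E : ℝ) : ℂ)‖ ≤ (‖deriv ψ z‖ * ‖χ z‖ + ‖ψ z‖ * ‖deriv χ z‖) * E := by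
        rw [norm_mul, Complex.norm_real, Real.norm_eq_abs, hE, Real.abs_exp]
        refine mul_le_mul_of_nonneg_right ?_ heE.le
        refine (norm_add_le _ _).trans ?_
        rw [norm_mul, norm_mul, RCLike.norm_conj, RCLike.norm_conj, norm_mul, norm_mul,
          Complex.norm_I, one_mul, one_mul]
      have e2 : ‖(starRingEnd ℂ) (ψ z) * χ z * (((-2 * y) * E : ℝ) : ℂ)‖
          ≤ ‖ψ z‖ * ‖χ z‖ * (2 * |y| * E) := by
        rw [norm_mul, norm_mul, RCLike.norm_conj, Complex.norm_real, Real.norm_eq_abs,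
          abs_mul, abs_mul, abs_neg, hE, Real.abs_exp]
        norm_num
      exact add_le_add e1 e2
    have e3 : ‖deriv ψ z‖ * ‖χ z‖ ≤ C * C := mul_le_mul b2 b3 (norm_nonneg _) hC
    have e4 : ‖ψ z‖ * ‖deriv χ z‖ ≤ C * C := mul_le_mul b1 b4 (norm_nonneg _) hC
    have e5 : ‖ψ z‖ * ‖χ z‖ ≤ C * C := mul_le_mul b1 b3 (norm_nonneg _) hC
    have hEe : E ≤ (1 + |x|) * Real.exp (-x ^ 2) := CA_exp_bound x y
    have hex := Real.exp_pos (-x ^ 2)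
    refine step1.trans ?_
    have goal2 : (‖deriv ψ z‖ * ‖χ z‖ + ‖ψ z‖ * ‖deriv χ z‖) * E
        + ‖ψ z‖ * ‖χ z‖ * (2 * |y| * E) ≤ ((2 + 2 * T) * (C * C)) * E := by
      have e6 : ‖ψ z‖ * ‖χ z‖ * (2 * |y|) ≤ C * C * (2 * T) := by
        refine mul_le_mul e5 (by linarith) (by positivity) (by positivity)
      nlinarith [heE.le, mul_le_mul_of_nonneg_right e6 heE.le]
    refine goal2.trans ?_
    exact mul_le_mul_of_nonneg_left hEe (by positivity)
  -- slice integrability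
  have hc1 : ∀ y : ℝ, Continuous fun x : ℝ => (x : ℂ) + y * I := fun y =>
    Complex.continuous_ofReal.add continuous_const
  have hcsq : ∀ y : ℝ, Continuous fun x : ℝ => -x ^ 2 - y ^ 2 := fun y =>
    ((continuous_pow 2).neg.sub continuous_const)
  have hcexp2 : ∀ y : ℝ, Continuous fun x : ℝ => ((Real.exp (-x ^ 2 - y ^ 2) : ℝ) : ℂ) := fun y =>
    Complex.continuous_ofReal.comp (Real.continuous_exp.comp (hcsq y))
  have hcexp3 : ∀ y : ℝ, Continuous fun x : ℝ => (((-2 * x) * Real.exp (-x ^ 2 - y ^ 2) : ℝ) : ℂ) :=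
    fun y => Complex.continuous_ofReal.comp ((continuous_const.mul continuous_id).mul
      (Real.continuous_exp.comp (hcsq y)))
  have hcexp4 : ∀ y : ℝ, Continuous fun x : ℝ => (((-2 * y) * Real.exp (-x ^ 2 - y ^ 2) : ℝ) : ℂ) :=
    fun y => Complex.continuous_ofReal.comp (continuous_const.mul
      (Real.continuous_exp.comp (hcsq y)))
  have hcontG : ∀ y : ℝ, Continuous fun x : ℝ => G x y := by
    intro y; rw [hGdef]
    exact ((Complex.continuous_conj.comp (hψc.comp (hc1 y))).mul (hχc.comp (hc1 y))).mul
      (hcexp2 y)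
  have hcontGx : ∀ y : ℝ, Continuous fun x : ℝ => Gx x y := by
    intro y; rw [hGxdef]
    refine Continuous.add ?_ ?_
    · exact (((Complex.continuous_conj.comp (hψ'c.comp (hc1 y))).mul (hχc.comp (hc1 y))).add
        ((Complex.continuous_conj.comp (hψc.comp (hc1 y))).mul (hχ'c.comp (hc1 y)))).mul (hcexp2 y)
    · exact ((Complex.continuous_conj.comp (hψc.comp (hc1 y))).mul (hχc.comp (hc1 y))).mul
        (hcexp3 y)
  have hcontGy : ∀ y : ℝ, Continuous fun x : ℝ => Gy x y := by
    intro y; rw [hGydef]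
    refine Continuous.add ?_ ?_
    · exact (((Complex.continuous_conj.comp (continuous_const.mul (hψ'c.comp (hc1 y)))).mul
        (hχc.comp (hc1 y))).add ((Complex.continuous_conj.comp (hψc.comp (hc1 y))).mul
        (continuous_const.mul (hχ'c.comp (hc1 y))))).mul (hcexp2 y)
    · exact ((Complex.continuous_conj.comp (hψc.comp (hc1 y))).mul (hχc.comp (hc1 y))).mul
        (hcexp4 y)
  have hptbound : ∀ y : ℝ, ∃ C : ℝ, 0 ≤ C ∧ ∀ x : ℝ,
      ‖ψ ((x:ℂ) + y*I)‖ ≤ C ∧ ‖deriv ψ ((x:ℂ) + y*I)‖ ≤ C ∧ ‖χ ((x:ℂ) + y*I)‖ ≤ C ∧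
        ‖deriv χ ((x:ℂ) + y*I)‖ ≤ C := by
    intro y
    obtain ⟨C, hC0, hCb⟩ := hbound y y
    exact ⟨C, hC0, fun x => hCb _ (by rw [him x y]; exact ⟨le_rfl, le_rfl⟩)⟩
  have hGsl : ∀ y : ℝ, Integrable fun x : ℝ => G x y := by
    intro y
    obtain ⟨C, hC0, hCb⟩ := hbound y y
    exact CA_integrable_dom (hcontG y) (C := C * C) fun x => hGnorm C x y hC0 hCb
  have hGxsl : ∀ y : ℝ, Integrable fun x : ℝ => Gx x y := by
    intro y
    obtain ⟨C, hC0, hCb⟩ := hptbound y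
    exact CA_integrable_dom (hcontGx y) (C := 2 * (C * C)) fun x => hGxnorm C x y hC0 (hCb x)
  have hGysl : ∀ y : ℝ, Integrable fun x : ℝ => Gy x y := by
    intro y
    obtain ⟨C, hC0, hCb⟩ := hptbound y
    exact CA_integrable_dom (hcontGy y) (C := (2 + 2 * |y|) * (C * C)) fun x =>
      hGynorm C |y| x y hC0 (abs_nonneg y) le_rfl (hCb x)
  have hGx0 : ∀ y : ℝ, (∫ x : ℝ, Gx x y) = 0 := fun y =>
    CA_integral_deriv_zero (fun x => hGx x y) (hGxsl y) (hGsl y)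
  -- differentiation under the integral sign
  set H : ℝ → ℂ := fun y => ∫ x : ℝ, G x y with hHdef
  set K : ℝ → ℂ := fun y => ∫ x : ℝ, Gy x y with hKdef
  have hHK : ∀ y₀ : ℝ, HasDerivAt H (K y₀) y₀ := by
    intro y₀
    obtain ⟨C, hC0, hCb⟩ := hbound (y₀ - 1) (y₀ + 1)
    have h := hasDerivAt_integral_of_dominated_loc_of_deriv_le
      (F := fun y x => G x y) (F' := fun y x => Gy x y) (x₀ := y₀) (s := Metric.ball y₀ 1)
      (bound := fun x => ((2 + 2 * (|y₀| + 1)) * (C * C)) * ((1 + |x|) * Real.exp (-x ^ 2)))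
      (Metric.ball_mem_nhds y₀ one_pos)
      (Eventually.of_forall fun y => (hcontG y).aestronglyMeasurable)
      (hGsl y₀) ((hcontGy y₀).aestronglyMeasurable) ?_ (CA_bound_integrable _)
      (Eventually.of_forall fun x y _ => hGy x y)
    · exact h.2
    · refine Eventually.of_forall fun x => fun y hy => ?_
      have hd : |y - y₀| < 1 := by
        have := Metric.mem_ball.mp hy; rwa [Real.dist_eq] at this
      have hyT : |y| ≤ |y₀| + 1 := by
        have := abs_sub_abs_le_abs_sub y y₀; linarith
      refine hGynorm C (|y₀| + 1) x y hC0 (by positivity) hyT ?_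
      refine hCb _ ?_
      rw [him x y]
      constructor <;> [linarith [abs_sub_lt_iff.mp hd]; linarith [(abs_sub_lt_iff.mp hd).1]]
    
  have hKD : ∀ y : ℝ, (∫ x : ℝ, D ((x : ℂ) + y * I)) = -(I / 2) * K y := by
    intro y
    have h1 : (∫ x : ℝ, D ((x : ℂ) + y * I))
        = ∫ x : ℝ, ((1 / 2 : ℂ) * Gx x y - (I / 2) * Gy x y) :=
      integral_congr_ae (Eventually.of_forall fun x => hDident x y)
    rw [h1, integral_sub ((hGxsl y).const_mul _) ((hGysl y).const_mul _),
      integral_const_mul, integral_const_mul, hGx0 y, hKdef]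
    ring
  have hDprod := CA_transfer_integrable D hD
  have hDsl_int : Integrable fun y : ℝ => ∫ x : ℝ, D ((x : ℂ) + y * I) :=
    hDprod.swap.integral_prod_left
  have hKint : Integrable K := by
    refine ((hDsl_int.const_mul (2 * I)).congr (Eventually.of_forall fun y => ?_))
    show 2 * I * (∫ x : ℝ, D ((x : ℂ) + y * I)) = K y
    rw [hKD y]
    ring_nf
    rw [Complex.I_sq]
    ring
  have hHint : Integrable H := by
    have h2 := (CA_transfer_integrable _ hGC).swap.integral_prod_left
    refine h2.congr (Eventually.of_forall fun y => ?_)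
    rw [hHdef]
    refine integral_congr_ae (Eventually.of_forall fun x => ?_)
    rw [hGdef]
    simp only [hexp_eq, Function.comp_apply, Prod.swap_prod_mk]
  have hK0 : (∫ y : ℝ, K y) = 0 := CA_integral_deriv_zero hHK hKint hHint
  have h0 : (∫ z : ℂ, D z) = 0 := by
    rw [CA_transfer D hD]
    have h2 : (∫ y : ℝ, ∫ x : ℝ, D ((x : ℂ) + y * I)) = ∫ y : ℝ, -(I / 2) * K y :=
      integral_congr_ae (Eventually.of_forall fun y => hKD y)
    rw [h2, integral_const_mul, hK0, mul_zero]
  have h1 : (∫ z : ℂ, D z)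
      = (∫ z : ℂ, (starRingEnd ℂ) (ψ z) * deriv χ z * Real.exp (-‖z‖ ^ 2))
        - ∫ z : ℂ, (starRingEnd ℂ) (z * ψ z) * χ z * Real.exp (-‖z‖ ^ 2) := by
    rw [hDdef]
    exact integral_sub h_rhs hprod
  have h3 : ((∫ z : ℂ, (starRingEnd ℂ) (ψ z) * deriv χ z * Real.exp (-‖z‖ ^ 2))
      - ∫ z : ℂ, (starRingEnd ℂ) (z * ψ z) * χ z * Real.exp (-‖z‖ ^ 2)) = 0 := by
    rw [← h1]; exact h0
  exact (sub_eq_zero.mp h3).symm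


end CAAuxiliary

open Filter Set Topology
open scoped ENNReal NNReal

/-- Membership in `H_P`: entire, `2π`-periodic in the real direction, and
square integrable against the Gaussian measure `(1/(2π)) e^{-|z|²} dz`. -/
def memHP (f : ℂ → ℂ) : Prop :=
  Differentiable ℂ f ∧ (∀ z, f (z + 2 * π) = f z) ∧
    Integrable (fun z : ℂ => ‖f z‖ ^ 2 * Real.exp (-‖z‖ ^ 2))

/-- In `H_P`, the creation operator `a⁺ψ = P (z·ψ)` (orthogonal
projection of multiplication by `z` onto `H_P`) and the annihilation operator
`aχ = χ'` are mutually adjoint: `⟨a⁺ψ, χ⟩ = ⟨ψ, aχ⟩` whenever both sides are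
defined. Here `φ = a⁺ψ` is characterized by `φ ∈ H_P` together with the
orthogonality of `z·ψ - φ` to every element of `H_P`, and
`⟨f,g⟩ = (1/(2π)) ∫ conj (f z) * g z * e^{-|z|²} dz`. -/
theorem creation_annihilation_adjoint (ψ χ φ : ℂ → ℂ)
    (hψ : memHP ψ) (hχ : memHP χ)
    (hzψ_L2 : Integrable (fun z : ℂ => ‖z * ψ z‖ ^ 2 * Real.exp (-‖z‖ ^ 2)))
    (hχ' : memHP (deriv χ))
    (hφ : memHP φ)
    (hφ_proj : ∀ f, memHP f →
      ∫ z : ℂ, (starRingEnd ℂ) (z * ψ z - φ z) * f z * Real.exp (-‖z‖ ^ 2) = 0)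
    (h_lhs : Integrable (fun z : ℂ =>
      (starRingEnd ℂ) (φ z) * χ z * Real.exp (-‖z‖ ^ 2)))
    (h_rhs : Integrable (fun z : ℂ =>
      (starRingEnd ℂ) (ψ z) * deriv χ z * Real.exp (-‖z‖ ^ 2))) :
    (1 / (2 * (π : ℂ))) * ∫ z : ℂ, (starRingEnd ℂ) (φ z) * χ z * Real.exp (-‖z‖ ^ 2)
      = (1 / (2 * (π : ℂ))) *
        ∫ z : ℂ, (starRingEnd ℂ) (ψ z) * deriv χ z * Real.exp (-‖z‖ ^ 2) := by
  have hψc : Continuous ψ := hψ.1.continuous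
  have hχc : Continuous χ := hχ.1.continuous
  have hmeas_exp : Continuous fun z : ℂ => ((Real.exp (-‖z‖ ^ 2) : ℝ) : ℂ) :=
    Complex.continuous_ofReal.comp (Real.continuous_exp.comp (by fun_prop))
  have hI1 : Integrable (fun z : ℂ =>
      (starRingEnd ℂ) (z * ψ z) * χ z * (Real.exp (-‖z‖ ^ 2) : ℝ)) := by
    refine Integrable.mono'
      (g := fun z => (1 / 2 : ℝ) * (‖z * ψ z‖ ^ 2 * Real.exp (-‖z‖ ^ 2)
        + ‖χ z‖ ^ 2 * Real.exp (-‖z‖ ^ 2))) ((hzψ_L2.add hχ.2.2).const_mul _) ?_ ?_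
    · exact (((Complex.continuous_conj.comp (continuous_id.mul hψc)).mul hχc).mul
        hmeas_exp).aestronglyMeasurable
    · refine Eventually.of_forall fun z => ?_
      have he := Real.exp_pos (-‖z‖ ^ 2)
      have h1 : ‖(starRingEnd ℂ) (z * ψ z) * χ z * ((Real.exp (-‖z‖ ^ 2) : ℝ) : ℂ)‖
          = ‖z * ψ z‖ * ‖χ z‖ * Real.exp (-‖z‖ ^ 2) := by
        rw [norm_mul, norm_mul, RCLike.norm_conj, Complex.norm_real, Real.norm_eq_abs,
          Real.abs_exp]
      rw [h1]
      nlinarith [mul_nonneg (sq_nonneg (‖z * ψ z‖ - ‖χ z‖)) he.le]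
  have step1 : (∫ z : ℂ, (starRingEnd ℂ) (φ z) * χ z * Real.exp (-‖z‖ ^ 2))
      = ∫ z : ℂ, (starRingEnd ℂ) (z * ψ z) * χ z * Real.exp (-‖z‖ ^ 2) := by
    have h := hφ_proj χ hχ
    have h2 : (fun z : ℂ => (starRingEnd ℂ) (z * ψ z - φ z) * χ z
        * ((Real.exp (-‖z‖ ^ 2) : ℝ) : ℂ))
        = fun z : ℂ => (starRingEnd ℂ) (z * ψ z) * χ z * ((Real.exp (-‖z‖ ^ 2) : ℝ) : ℂ)
          - (starRingEnd ℂ) (φ z) * χ z * ((Real.exp (-‖z‖ ^ 2) : ℝ) : ℂ) :=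
      funext fun z => by rw [map_sub]; ring
    rw [show (∫ z : ℂ, (starRingEnd ℂ) (z * ψ z - φ z) * χ z * Real.exp (-‖z‖ ^ 2))
        = ∫ z : ℂ, ((starRingEnd ℂ) (z * ψ z) * χ z * ((Real.exp (-‖z‖ ^ 2) : ℝ) : ℂ)
          - (starRingEnd ℂ) (φ z) * χ z * ((Real.exp (-‖z‖ ^ 2) : ℝ) : ℂ)) from by rw [← h2],
      integral_sub hI1 h_lhs] at h
    exact (sub_eq_zero.mp h).symm
  have step2 := CA_ibp ψ χ hψ.1 hψ.2.1 hψ.2.2 hχ.1 hχ.2.1 hχ.2.2 hzψ_L2 h_rhs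
  rw [step1, step2]
end
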